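/- Let T be nonexpansive with infimal displacement vector v attained at x_⋆ (i.e., v = x_⋆ − T x_⋆), and let x^k be the Picard iteration x^{k+1} = T x^k. Then ‖(x^k − x^0)/k + v‖² ≤ (4/k²) ‖x^0 − x_⋆‖² for all k ≥ 1. -/

import Mathlib

def Nonexpansive {H : Type*} [NormedAddCommGroup H] (T : H → H) : Prop :=
  ∀ x y, ‖T x - T y‖ ≤ ‖x - y‖

/-- For the Picard iteration of a nonexpansive operator whose infimal displacement vector
`v` is attained at `x⋆`, the normalized iterate converges to `-v` at rate `O(1/k²)`. -/
theorem picard_normalized_iterate_rate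
    {H : Type*} [NormedAddCommGroup H] [InnerProductSpace ℝ H] [CompleteSpace H]
    (T : H → H) (hT : Nonexpansive T) (v xs : H)
    (hv : v ∈ closure (Set.range fun x => x - T x))
    (hvmin : ∀ w ∈ closure (Set.range fun x => x - T x), ‖v‖ ≤ ‖w‖)
    (hxs : xs - T xs = v)
    (x : ℕ → H) (hx : ∀ k, x (k + 1) = T (x k)) :
    ∀ k : ℕ, 1 ≤ k →
      ‖(1 / (k : ℝ)) • (x k - x 0) + v‖ ^ 2 ≤ (4 / (k : ℝ) ^ 2) * ‖x 0 - xs‖ ^ 2 := by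
  -- Half-step lemma
  have key : ∀ y : H, y - T y = v → (y - (1/2:ℝ)•v) - T (y - (1/2:ℝ)•v) = v := by
    intro y hy
    set z := y - (1/2:ℝ)•v with hz
    set e := T z - T y with he
    have hTy : T y = y - v := by rw [← hy]; abel
    have hne : ‖e‖ ≤ (1/2) * ‖v‖ := by
      have h := hT z y
      have hzy : z - y = -((1/2:ℝ)•v) := by rw [hz]; abel
      rw [hzy, norm_neg, norm_smul] at h
      simpa using h
    have hw : z - T z = (1/2:ℝ)•v - e := by
      rw [he, hTy, hz]; module
    have hmem : z - T z ∈ closure (Set.range fun x => x - T x) :=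
      subset_closure ⟨z, rfl⟩
    have hge : ‖v‖ ≤ ‖(1/2:ℝ)•v - e‖ := hw ▸ hvmin _ hmem
    have h1 : ‖(1/2:ℝ)•v - e‖^2
        = (1/4)*‖v‖^2 - (inner ℝ v e : ℝ) + ‖e‖^2 := by
      rw [norm_sub_sq_real, real_inner_smul_left, norm_smul]
      simp [Real.norm_eq_abs]
      ring
    have h2 : ‖e + (1/2:ℝ)•v‖^2
        = ‖e‖^2 + (inner ℝ v e : ℝ) + (1/4)*‖v‖^2 := by
      rw [norm_add_sq_real, real_inner_smul_right, norm_smul, real_inner_comm]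
      simp [Real.norm_eq_abs]
      ring
    have hge2 : ‖v‖^2 ≤ ‖(1/2:ℝ)•v - e‖^2 := by
      apply pow_le_pow_left₀ (norm_nonneg _) hge
    have he2 : ‖e‖^2 ≤ (1/4)*‖v‖^2 := by
      nlinarith [norm_nonneg e, norm_nonneg v]
    have hzero : ‖e + (1/2:ℝ)•v‖^2 ≤ 0 := by nlinarith
    have hez : e + (1/2:ℝ)•v = 0 := by
      have : ‖e + (1/2:ℝ)•v‖ = 0 := by
        nlinarith [norm_nonneg (e + (1/2:ℝ)•v)]
      simpa using this
    have hev : e = -((1/2:ℝ)•v) := by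
      have := hez; rw [add_eq_zero_iff_eq_neg] at this; exact this
    rw [hw, hev]
    module
  -- Full step
  have step : ∀ y : H, y - T y = v → (y - v) - T (y - v) = v := by
    intro y hy
    have h1 := key y hy
    have h2 := key _ h1
    have hzz : (y - (1/2:ℝ)•v) - (1/2:ℝ)•v = y - v := by module
    rwa [hzz] at h2
  -- Orbit of xs: T (xs - k•v) = xs - (k+1)•v
  have hfix : ∀ k : ℕ, (xs - (k:ℝ)•v) - T (xs - (k:ℝ)•v) = v := by
    intro k
    induction k with
    | zero => simpa using hxs
    | succ n ih =>
      have h := step _ ih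
      have h' : (xs - (n:ℝ)•v) - v = xs - ((n:ℝ)+1)•v := by module
      rw [h'] at h
      have hc : ((n+1:ℕ):ℝ) = (n:ℝ)+1 := by push_cast; ring
      rw [hc]
      exact h
  -- Orbit bound
  have horb : ∀ k : ℕ, ‖x k - (xs - (k:ℝ)•v)‖ ≤ ‖x 0 - xs‖ := by
    intro k
    induction k with
    | zero => simp
    | succ n ih =>
      have hTn0 : (xs - (n:ℝ)•v) - ((xs - (n:ℝ)•v) - T (xs - (n:ℝ)•v))
          = (xs - (n:ℝ)•v) - v := by rw [hfix n]
      rw [sub_sub_cancel] at hTn0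
      have hTn : T (xs - (n:ℝ)•v) = xs - ((n:ℝ)+1)•v := by
        rw [hTn0]; module
      have heq : x (n+1) - (xs - ((n+1:ℕ):ℝ)•v)
          = T (x n) - T (xs - (n:ℝ)•v) := by
        rw [hx n, hTn]
        push_cast
        module
      rw [heq]
      exact le_trans (hT _ _) ih
  intro k hk
  have hk0 : (0:ℝ) < (k:ℝ) := by exact_mod_cast hk
  have hid : (1 / (k:ℝ)) • (x k - x 0) + v
      = (1 / (k:ℝ)) • ((x k - (xs - (k:ℝ)•v)) + (xs - x 0)) := by
    match_scalars <;> field_simp <;> ring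
  have hnorm : ‖(1 / (k:ℝ)) • (x k - x 0) + v‖ ≤ (2 / (k:ℝ)) * ‖x 0 - xs‖ := by
    rw [hid, norm_smul]
    have h1 : ‖(x k - (xs - (k:ℝ)•v)) + (xs - x 0)‖
        ≤ ‖x 0 - xs‖ + ‖x 0 - xs‖ := by
      calc ‖(x k - (xs - (k:ℝ)•v)) + (xs - x 0)‖
          ≤ ‖x k - (xs - (k:ℝ)•v)‖ + ‖xs - x 0‖ := norm_add_le _ _
        _ ≤ ‖x 0 - xs‖ + ‖x 0 - xs‖ := by
            rw [norm_sub_rev xs]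
            exact add_le_add (horb k) le_rfl
    have h2 : ‖(1:ℝ) / (k:ℝ)‖ = 1 / (k:ℝ) := by
      rw [Real.norm_eq_abs, abs_of_pos (by positivity)]
    rw [h2]
    calc (1 / (k:ℝ)) * ‖(x k - (xs - (k:ℝ)•v)) + (xs - x 0)‖
        ≤ (1 / (k:ℝ)) * (‖x 0 - xs‖ + ‖x 0 - xs‖) := by
          apply mul_le_mul_of_nonneg_left h1 (by positivity)
      _ = (2 / (k:ℝ)) * ‖x 0 - xs‖ := by ring
  have hsq := pow_le_pow_left₀ (norm_nonneg _) hnorm 2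
  calc ‖(1 / (k:ℝ)) • (x k - x 0) + v‖ ^ 2
      ≤ ((2 / (k:ℝ)) * ‖x 0 - xs‖) ^ 2 := hsq
    _ = (4 / (k:ℝ)^2) * ‖x 0 - xs‖ ^ 2 := by
        field_simp
        ring
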